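/- Let G be a real symmetric 4×4 matrix in emission form, and let A = √(G₂₃G₁₄), B = √(G₁₃G₂₄), C = √(G₁₂G₃₄). Then det G < 0 if and only if A, B, C satisfy the strict triangle inequalities A < B + C, B < A + C and C < A + B. -/

import Mathlib

lemma det_emission_aux (a b c d e f : ℝ) :
    Matrix.det !![0, a, b, c; a, 0, d, e; b, d, 0, f; c, e, f, 0]
      = a^2*f^2 + b^2*e^2 + c^2*d^2 - 2*(a*f*b*e + a*f*c*d + b*e*c*d) := by
  rw [Matrix.det_succ_row_zero]
  simp only [Fin.sum_univ_four]
  norm_num [Matrix.submatrix_apply, Fin.succAbove, Fin.lt_def, Matrix.det_fin_three,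
    show ((3:Fin 4):ℕ) = 3 from rfl, show Fin.castSucc 2 = (2:Fin 4) from rfl]
  simp only [Matrix.cons_val_two, Matrix.cons_val_three, Matrix.tail_cons, Matrix.head_cons, Matrix.vecHead, Matrix.cons_val_zero]
  ring

/-- For a real symmetric 4×4 matrix `G` in emission form (zero diagonal,
positive off-diagonal entries), with `A = √(G₂₃G₁₄)`, `B = √(G₁₃G₂₄)`, `C = √(G₁₂G₃₄)`,
one has `det G < 0` iff `A, B, C` satisfy the strict triangle inequalities. -/
theorem stmt_1 (G : Matrix (Fin 4) (Fin 4) ℝ)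
    (hsymm : G.IsSymm) (hdiag : ∀ i, G i i = 0)
    (hpos : ∀ i j, i ≠ j → 0 < G i j) :
    G.det < 0 ↔
      Real.sqrt (G 1 2 * G 0 3) < Real.sqrt (G 0 2 * G 1 3) + Real.sqrt (G 0 1 * G 2 3)
      ∧ Real.sqrt (G 0 2 * G 1 3) < Real.sqrt (G 1 2 * G 0 3) + Real.sqrt (G 0 1 * G 2 3)
      ∧ Real.sqrt (G 0 1 * G 2 3) < Real.sqrt (G 1 2 * G 0 3) + Real.sqrt (G 0 2 * G 1 3) := by
  have hsym : ∀ i j, G j i = G i j := by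
    intro i j
    have := congrFun (congrFun hsymm i) j
    simpa [Matrix.transpose_apply] using this
  set a := G 0 1 with ha
  set b := G 0 2 with hb
  set c := G 0 3 with hc
  set d := G 1 2 with hd
  set e := G 1 3 with he
  set f := G 2 3 with hf
  have hA0 : (0:ℝ) < d * c := mul_pos (hpos 1 2 (by decide)) (hpos 0 3 (by decide))
  have hB0 : (0:ℝ) < b * e := mul_pos (hpos 0 2 (by decide)) (hpos 1 3 (by decide))
  have hC0 : (0:ℝ) < a * f := mul_pos (hpos 0 1 (by decide)) (hpos 2 3 (by decide))
  set A := Real.sqrt (d * c) with hA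
  set B := Real.sqrt (b * e) with hB
  set C := Real.sqrt (a * f) with hC
  have hApos : 0 < A := Real.sqrt_pos.mpr hA0
  have hBpos : 0 < B := Real.sqrt_pos.mpr hB0
  have hCpos : 0 < C := Real.sqrt_pos.mpr hC0
  have hA2 : A ^ 2 = d * c := Real.sq_sqrt hA0.le
  have hB2 : B ^ 2 = b * e := Real.sq_sqrt hB0.le
  have hC2 : C ^ 2 = a * f := Real.sq_sqrt hC0.le
  have hGeq : G = !![0, a, b, c; a, 0, d, e; b, d, 0, f; c, e, f, 0] := by
    ext i j
    fin_cases i <;> fin_cases j <;>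
      simp [ha, hb, hc, hd, he, hf, hdiag, hsym 0 1, hsym 0 2, hsym 0 3, hsym 1 2,
        hsym 1 3, hsym 2 3]
  have hdet : G.det = -((A + B + C) * (-A + B + C) * (A - B + C) * (A + B - C)) := by
    rw [hGeq, det_emission_aux]
    linear_combination (2*B^2 + 2*C^2 - A^2 - d*c) * hA2
      + (2*d*c + 2*C^2 - B^2 - b*e) * hB2 + (2*d*c + 2*b*e - C^2 - a*f) * hC2
  rw [hdet]
  constructor
  · intro h
    have hP : 0 < (A + B + C) * (-A + B + C) * (A - B + C) * (A + B - C) := by linarith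
    have hs : 0 < A + B + C := by linarith
    refine ⟨?_, ?_, ?_⟩ <;> by_contra hcon <;> push_neg at hcon
    · have hq : 0 < (A + B + C) * ((A - B + C) * (A + B - C)) :=
        mul_pos hs (mul_pos (by linarith) (by linarith))
      have hle := mul_nonpos_of_nonneg_of_nonpos hq.le
        (by linarith : -A + B + C ≤ 0)
      nlinarith [hle]
    · have hq : 0 < (A + B + C) * ((-A + B + C) * (A + B - C)) :=
        mul_pos hs (mul_pos (by linarith) (by linarith))
      have hle := mul_nonpos_of_nonneg_of_nonpos hq.le
        (by linarith : A - B + C ≤ 0)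
      nlinarith [hle]
    · have hq : 0 < (A + B + C) * ((-A + B + C) * (A - B + C)) :=
        mul_pos hs (mul_pos (by linarith) (by linarith))
      have hle := mul_nonpos_of_nonneg_of_nonpos hq.le
        (by linarith : A + B - C ≤ 0)
      nlinarith [hle]
  · rintro ⟨h1, h2, h3⟩
    have : 0 < (A + B + C) * (-A + B + C) * (A - B + C) * (A + B - C) := by
      have f1 : 0 < A + B + C := by linarith
      have f2 : 0 < -A + B + C := by linarith
      have f3 : 0 < A - B + C := by linarith
      have f4 : 0 < A + B - C := by linarith
      positivity
    linarith
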